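/- Let Q : ℝ → [0,∞) be strictly convex and even and φ a bounded measurable function on [0,1]. Then for almost every s ∈ [0,1] and every sequence of subintervals J_n ∋ s with |J_n| → 0, one has ⟨Q(φ−c)⟩_{J_n} → Q(φ(s)−c) for every c ∈ ℝ, and the minimizers 𝒞(φ,J_n) of c ↦ ⟨Q(φ−c)⟩_{J_n} converge to φ(s). -/

import Mathlib

open MeasureTheory Set Filter Topology
open scoped ENNReal

noncomputable section

/-- Lebesgue average of a (nonnegative-valued, via `ENNReal.ofReal`) function over `J`. -/
def avg (J : Set ℝ) (f : ℝ → ℝ) : ℝ≥0∞ :=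
  (volume J)⁻¹ * ∫⁻ x in J, ENNReal.ofReal (f x)

/-- `V_c(φ, J) = ⟨Q(φ - c)⟩_J`. -/
def Vc (Q φ : ℝ → ℝ) (J : Set ℝ) (c : ℝ) : ℝ≥0∞ :=
  avg J (fun x => Q (φ x - c))

/-- `V(φ, J) = inf_c V_c(φ, J)`. -/
def V (Q φ : ℝ → ℝ) (J : Set ℝ) : ℝ≥0∞ :=
  ⨅ c : ℝ, Vc Q φ J c

/-- `W(φ, J) = sup { V(φ, L) : L ⊆ J an interval }`. -/
def W (Q φ : ℝ → ℝ) (J : Set ℝ) : ℝ≥0∞ :=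
  ⨆ (a : ℝ) (b : ℝ) (_ : Icc a b ⊆ J), V Q φ (Icc a b)

/-- Decreasing rearrangement of `f : [0,1] → ℝ`:
`f*(t) = inf {λ : |{s ∈ [0,1] : f(s) > λ}| ≤ t}`. -/
def decRe (f : ℝ → ℝ) (t : ℝ) : ℝ :=
  sInf {l : ℝ | volume {s ∈ Icc (0:ℝ) 1 | l < f s} ≤ ENNReal.ofReal t}

/-- `𝒞(φ, J)`: the minimizer of `c ↦ V_c(φ, J)` (when it exists). -/
def CC (Q φ : ℝ → ℝ) (J : Set ℝ) : ℝ :=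
  Classical.epsilon (fun c => ∀ c', Vc Q φ J c ≤ Vc Q φ J c')

/-- `α`-concatenation of `φ₋ : [a₋,b₋] → ℝ` and `φ₊ : [a₊,b₊] → ℝ`, as a function on `[0,1]`. -/
def concat (φm φp : ℝ → ℝ) (am bm ap bp α : ℝ) : ℝ → ℝ :=
  fun s => if s < α then φm (am + (bm - am) * (s / α))
           else φp (ap + (bp - ap) * ((s - α) / (1 - α)))

section Helpers

variable {Q : ℝ → ℝ}

lemma Qzero_lt (hQ : StrictConvexOn ℝ univ Q) (hQe : ∀ t, Q (-t) = Q t) {t : ℝ} (ht : t ≠ 0) :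
    Q 0 < Q t := by
  have hne : t ≠ -t := fun h => ht (by linarith)
  have h := hQ.2 (mem_univ t) (mem_univ (-t)) hne one_half_pos one_half_pos (by norm_num)
  simp only [smul_eq_mul] at h
  rw [hQe t] at h
  have h0 : (1/2 : ℝ) * t + (1/2) * (-t) = 0 := by ring
  rw [h0] at h
  linarith

lemma Qzero_le (hQ : StrictConvexOn ℝ univ Q) (hQe : ∀ t, Q (-t) = Q t) (t : ℝ) :
    Q 0 ≤ Q t := by
  rcases eq_or_ne t 0 with rfl | ht
  · exact le_refl _
  · exact (Qzero_lt hQ hQe ht).le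

lemma Qmono (hQ : StrictConvexOn ℝ univ Q) (hQe : ∀ t, Q (-t) = Q t) {u v : ℝ}
    (h : |u| ≤ |v|) : Q u ≤ Q v := by
  have habs : ∀ t : ℝ, Q |t| = Q t := by
    intro t
    rcases abs_cases t with ⟨h1, _⟩ | ⟨h1, _⟩
    · rw [h1]
    · rw [h1, hQe]
  rw [← habs u, ← habs v]
  set x := |u| with hx'
  set y := |v| with hy'
  have hx : 0 ≤ x := abs_nonneg u
  rcases eq_or_lt_of_le h with heq | hlt
  · rw [heq]
  · have hy : 0 < y := lt_of_le_of_lt hx hlt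
    have hxy : x / y ≤ 1 := by
      rw [div_le_one hy]; exact hlt.le
    have key := hQ.convexOn.2 (mem_univ y) (mem_univ (0:ℝ))
      (show (0:ℝ) ≤ x / y by positivity) (show (0:ℝ) ≤ 1 - x / y by linarith)
      (show x / y + (1 - x / y) = 1 by ring)
    simp only [smul_eq_mul, mul_zero, add_zero, div_mul_cancel₀ x hy.ne'] at key
    have hQ0y := Qzero_le hQ hQe y
    nlinarith [mul_le_mul_of_nonneg_left hQ0y (by linarith : (0:ℝ) ≤ 1 - x / y)]

lemma Qcont (hQ : StrictConvexOn ℝ univ Q) : Continuous Q := by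
  have := hQ.convexOn.continuousOn isOpen_univ
  rwa [continuousOn_univ] at this

lemma Qlip (hQ : StrictConvexOn ℝ univ Q) (R : ℝ) :
    ∃ L : NNReal, ∀ u v : ℝ, |u| ≤ R → |v| ≤ R → |Q u - Q v| ≤ L * |u - v| := by
  have hQc : Continuous Q := Qcont hQ
  have hconv : ConvexOn ℝ (Metric.ball (0:ℝ) (|R|+2)) Q :=
    hQ.convexOn.subset (subset_univ _) (convex_ball _ _)
  have hbd : Bornology.IsBounded (Q '' Metric.ball (0:ℝ) (|R|+2)) := by
    have hsub : Q '' Metric.ball (0:ℝ) (|R|+2) ⊆ Q '' Metric.closedBall 0 (|R|+2) :=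
      image_mono Metric.ball_subset_closedBall
    exact (((isCompact_closedBall _ _).image hQc).isBounded).subset hsub
  obtain ⟨L, hL⟩ := hconv.exists_lipschitzOnWith_of_isBounded
    (by linarith : |R| + 1 < |R| + 2) hbd
  refine ⟨L, fun u v hu hv => ?_⟩
  have hu' : u ∈ Metric.ball (0:ℝ) (|R|+1) := by
    rw [Metric.mem_ball, Real.dist_eq, sub_zero]
    have := le_abs_self R; linarith
  have hv' : v ∈ Metric.ball (0:ℝ) (|R|+1) := by
    rw [Metric.mem_ball, Real.dist_eq, sub_zero]
    have := le_abs_self R; linarith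
  have := hL.dist_le_mul u hu' v hv'
  rwa [Real.dist_eq, Real.dist_eq] at this

lemma integrableOn_of_bound {f : ℝ → ℝ} {J : Set ℝ} (hJ : MeasurableSet J)
    (hvol : volume J ≠ ⊤) (hf : Measurable f) {C : ℝ} (hC : ∀ x ∈ J, |f x| ≤ C) :
    IntegrableOn f J := by
  apply Measure.integrableOn_of_bounded hvol hf.aestronglyMeasurable
  filter_upwards [ae_restrict_mem hJ] with x hx
  simpa [Real.norm_eq_abs] using hC x hx

end Helpers

lemma avg_eq_ofReal {J : Set ℝ} (h0 : volume J ≠ 0)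
    {f : ℝ → ℝ} (hf0 : ∀ x, 0 ≤ f x) (hfi : IntegrableOn f J) :
    avg J f = ENNReal.ofReal (⨍ x in J, f x) := by
  rw [avg, setAverage_eq, smul_eq_mul,
    ENNReal.ofReal_mul (inv_nonneg.mpr measureReal_nonneg),
    ← ofReal_integral_eq_lintegral_ofReal hfi (ae_of_all _ hf0)]
  congr 1
  rw [measureReal_def, ← ENNReal.toReal_inv, ENNReal.ofReal_toReal (by simp [h0])]

lemma abs_average_sub_average_le {J : Set ℝ} (hJ : MeasurableSet J)
    {f g h : ℝ → ℝ} (hfi : IntegrableOn f J) (hgi : IntegrableOn g J)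
    (hhi : IntegrableOn h J) (hpt : ∀ y ∈ J, |f y - g y| ≤ h y) :
    |(⨍ x in J, f x) - ⨍ x in J, g x| ≤ ⨍ x in J, h x := by
  rw [setAverage_eq, setAverage_eq, setAverage_eq, smul_eq_mul, smul_eq_mul, smul_eq_mul,
    ← mul_sub, abs_mul, abs_of_nonneg (inv_nonneg.mpr measureReal_nonneg)]
  apply mul_le_mul_of_nonneg_left _ (inv_nonneg.mpr measureReal_nonneg)
  rw [← integral_sub hfi hgi]
  calc |∫ x in J, (f x - g x)| ≤ ∫ x in J, |f x - g x| := by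
        simpa [Real.norm_eq_abs] using
          norm_integral_le_integral_norm (μ := volume.restrict J) (fun x => f x - g x)
    _ ≤ ∫ x in J, h x := setIntegral_mono_on (hfi.sub hgi).abs hhi hJ hpt

lemma Vc_mono_pt {Q φ : ℝ → ℝ} (hQ : StrictConvexOn ℝ univ Q) (hφ : Measurable φ)
    {J : Set ℝ} {c c' : ℝ} (hpt : ∀ y ∈ J, Q (φ y - c) ≤ Q (φ y - c')) :
    Vc Q φ J c ≤ Vc Q φ J c' := by
  unfold Vc avg
  apply mul_le_mul_right
  apply setLIntegral_mono (ENNReal.measurable_ofReal.comp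
    ((Qcont hQ).measurable.comp (hφ.sub_const _)))
  intro x hx
  exact ENNReal.ofReal_le_ofReal (hpt x hx)

lemma exists_Vc_min {Q φ : ℝ → ℝ} (hQ : StrictConvexOn ℝ univ Q) (hQe : ∀ t, Q (-t) = Q t)
    (hQ0 : ∀ t, 0 ≤ Q t) (hφ : Measurable φ) {M : ℝ}
    (hM : ∀ x ∈ Icc (0:ℝ) 1, |φ x| ≤ M) (hM0 : 0 ≤ M)
    {a b : ℝ} (hab : a < b) (hsub : Icc a b ⊆ Icc (0:ℝ) 1) :
    ∃ c₀, ∀ c', Vc Q φ (Icc a b) c₀ ≤ Vc Q φ (Icc a b) c' := by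
  set J := Icc a b with hJdef
  have hJ : MeasurableSet J := measurableSet_Icc
  have hvol : volume J = ENNReal.ofReal (b - a) := Real.volume_Icc
  have h0 : volume J ≠ 0 := by
    rw [hvol, Ne, ENNReal.ofReal_eq_zero, not_le]; linarith
  have hT : volume J ≠ ⊤ := by rw [hvol]; exact ENNReal.ofReal_ne_top
  have hbφ : ∀ y ∈ J, |φ y| ≤ M := fun y hy => hM y (hsub hy)
  have hQm : Continuous Q := Qcont hQ
  -- integrability of the integrands
  have hint : ∀ c : ℝ, IntegrableOn (fun y => Q (φ y - c)) J := by
    intro c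
    apply integrableOn_of_bound hJ hT (hQm.measurable.comp (hφ.sub_const _))
    intro y hy
    show |Q (φ y - c)| ≤ Q (M + |c|)
    rw [abs_of_nonneg (hQ0 _)]
    apply Qmono hQ hQe
    rw [abs_of_nonneg (by positivity : (0:ℝ) ≤ M + |c|)]
    calc |φ y - c| ≤ |φ y| + |c| := abs_sub _ _
      _ ≤ M + |c| := by have := hbφ y hy; linarith
  set g : ℝ → ℝ := fun c => ⨍ y in J, Q (φ y - c) with hgdef
  have hVg : ∀ c, Vc Q φ J c = ENNReal.ofReal (g c) := fun c =>
    avg_eq_ofReal h0 (fun x => hQ0 _) (hint c)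
  -- Lipschitz continuity of g on [-M, M]
  obtain ⟨L, hL⟩ := Qlip hQ (2 * M)
  have hglip : ∀ c ∈ Icc (-M) M, ∀ c' ∈ Icc (-M) M, |g c - g c'| ≤ L * |c - c'| := by
    intro c hc c' hc'
    have hconst : (⨍ _ in J, (L : ℝ) * |c - c'|) = (L : ℝ) * |c - c'| :=
      setAverage_const h0 hT ((L : ℝ) * |c - c'|)
    rw [← hconst]
    apply abs_average_sub_average_le hJ (hint c) (hint c') (integrableOn_const hT)
    intro y hy
    have h1 : |φ y - c| ≤ 2 * M := by
      have := hbφ y hy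
      rw [abs_le] at *
      rcases hc with ⟨hc1, hc2⟩
      constructor <;> linarith [this.1, this.2]
    have h2 : |φ y - c'| ≤ 2 * M := by
      have := hbφ y hy
      rw [abs_le] at *
      rcases hc' with ⟨hc1, hc2⟩
      constructor <;> linarith [this.1, this.2]
    have := hL _ _ h1 h2
    have heq : (φ y - c) - (φ y - c') = c' - c := by ring
    rw [heq, abs_sub_comm c' c] at this
    exact this
  have hgcont : ContinuousOn g (Icc (-M) M) := by
    apply LipschitzOnWith.continuousOn (K := L)
    apply LipschitzOnWith.of_dist_le_mul
    intro c hc c' hc'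
    rw [Real.dist_eq, Real.dist_eq]
    exact hglip c hc c' hc'
  obtain ⟨c₀, hc₀mem, hc₀min⟩ := isCompact_Icc.exists_isMinOn
    ⟨0, by constructor <;> linarith⟩ hgcont
  refine ⟨c₀, fun c' => ?_⟩
  have hmin : ∀ c ∈ Icc (-M) M, Vc Q φ J c₀ ≤ Vc Q φ J c := by
    intro c hc
    rw [hVg, hVg]
    exact ENNReal.ofReal_le_ofReal (hc₀min hc)
  rcases le_total c' M with hc'M | hc'M
  · rcases le_total (-M) c' with hMc' | hMc'
    · exact hmin c' ⟨hMc', hc'M⟩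
    · -- c' ≤ -M
      refine le_trans (hmin (-M) ⟨le_refl _, by linarith⟩) ?_
      apply Vc_mono_pt hQ hφ
      intro y hy
      apply Qmono hQ hQe
      have h1 : -M ≤ φ y := (abs_le.mp (hbφ y hy)).1
      rw [abs_of_nonneg (by linarith), abs_of_nonneg (by linarith)]
      linarith
  · -- M ≤ c'
    refine le_trans (hmin M ⟨by linarith, le_refl _⟩) ?_
    apply Vc_mono_pt hQ hφ
    intro y hy
    apply Qmono hQ hQe
    have h1 : φ y ≤ M := (abs_le.mp (hbφ y hy)).2
    rw [abs_of_nonpos (by linarith), abs_of_nonpos (by linarith)]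
    linarith

theorem stmt7 (Q : ℝ → ℝ) (hQ : StrictConvexOn ℝ univ Q) (hQe : ∀ t, Q (-t) = Q t)
    (hQ0 : ∀ t, 0 ≤ Q t) (φ : ℝ → ℝ) (hφ : Measurable φ)
    (M : ℝ) (hM : ∀ x ∈ Icc (0:ℝ) 1, |φ x| ≤ M) :
    ∀ᵐ s ∂(volume.restrict (Icc (0:ℝ) 1)), ∀ a b : ℕ → ℝ,
      (∀ n, a n < b n) → (∀ n, Icc (a n) (b n) ⊆ Icc (0:ℝ) 1) →
      (∀ n, s ∈ Icc (a n) (b n)) → Tendsto (fun n => b n - a n) atTop (nhds 0) →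
      (∀ c : ℝ, Tendsto (fun n => Vc Q φ (Icc (a n) (b n)) c) atTop
          (nhds (ENNReal.ofReal (Q (φ s - c)))))
      ∧ Tendsto (fun n => CC Q φ (Icc (a n) (b n))) atTop (nhds (φ s)) := by
  classical
  have hM0 : 0 ≤ M := le_trans (abs_nonneg _) (hM 0 (by norm_num))
  have hQm : Continuous Q := Qcont hQ
  -- truncation of φ
  set ψ : ℝ → ℝ := (Icc (0:ℝ) 1).indicator φ with hψdef
  have hψm : Measurable ψ := hφ.indicator measurableSet_Icc
  have hψb : ∀ x, |ψ x| ≤ M := by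
    intro x
    by_cases hx : x ∈ Icc (0:ℝ) 1
    · rw [hψdef, indicator_of_mem hx]; exact hM x hx
    · rw [hψdef, indicator_of_notMem hx]; simpa using hM0
  have hψeq : ∀ x ∈ Icc (0:ℝ) 1, ψ x = φ x := fun x hx => indicator_of_mem hx φ
  have hψint : Integrable ψ volume := by
    rw [hψdef, integrable_indicator_iff measurableSet_Icc]
    exact integrableOn_of_bound measurableSet_Icc (by simp [Real.volume_Icc]) hφ hM
  have hψloc : LocallyIntegrable ψ volume := hψint.locallyIntegrable
  filter_upwards [ae_mono Measure.restrict_le_self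
      (IsUnifLocDoublingMeasure.ae_tendsto_average_norm_sub (μ := volume) hψloc 1),
    ae_restrict_mem measurableSet_Icc] with s hs hs01
  intro a b hab hsub hmem hba
  set J : ℕ → Set ℝ := fun n => Icc (a n) (b n) with hJdef
  have hφψs : φ s = ψ s := (hψeq s hs01).symm
  -- apply the Lebesgue differentiation input
  set w : ℕ → ℝ := fun n => (a n + b n) / 2 with hwdef
  set δ : ℕ → ℝ := fun n => (b n - a n) / 2 with hδdef
  have hcb : ∀ n, Metric.closedBall (w n) (δ n) = J n := by
    intro n
    rw [Real.closedBall_eq_Icc]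
    have e1 : w n - δ n = a n := by show (a n + b n)/2 - (b n - a n)/2 = a n; ring
    have e2 : w n + δ n = b n := by show (a n + b n)/2 + (b n - a n)/2 = b n; ring
    rw [e1, e2]
  have hδlim : Tendsto δ atTop (𝓝[>] 0) := by
    rw [tendsto_nhdsWithin_iff]
    constructor
    · have := hba.div_const 2
      simpa using this
    · exact Eventually.of_forall fun n => half_pos (sub_pos.mpr (hab n))
  have hmem' : ∀ᶠ n in atTop, s ∈ Metric.closedBall (w n) (1 * δ n) := by
    apply Eventually.of_forall
    intro n
    rw [one_mul, hcb n]
    exact hmem n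
  have hA : Tendsto (fun n => ⨍ y in J n, |ψ y - ψ s|) atTop (𝓝 0) := by
    have := hs w δ hδlim hmem'
    simp only [Real.norm_eq_abs] at this
    convert this using 2 with n
    rw [hcb n]
  -- basic measure facts about J n
  have hJm : ∀ n, MeasurableSet (J n) := fun n => measurableSet_Icc
  have hJ0 : ∀ n, volume (J n) ≠ 0 := by
    intro n
    show volume (Icc (a n) (b n)) ≠ 0
    rw [Real.volume_Icc, Ne, ENNReal.ofReal_eq_zero, not_le]
    linarith [hab n]
  have hJT : ∀ n, volume (J n) ≠ ⊤ := by
    intro n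
    show volume (Icc (a n) (b n)) ≠ ⊤
    rw [Real.volume_Icc]; exact ENNReal.ofReal_ne_top
  have hbJ : ∀ n, ∀ y ∈ J n, |ψ y| ≤ M := fun n y _ => hψb y
  have hφψJ : ∀ n, ∀ y ∈ J n, φ y = ψ y := fun n y hy => (hψeq y (hsub n hy)).symm
  -- integrability
  have hintQ : ∀ (n : ℕ) (c : ℝ), IntegrableOn (fun y => Q (ψ y - c)) (J n) := by
    intro n c
    apply integrableOn_of_bound (hJm n) (hJT n) (hQm.measurable.comp (hψm.sub_const _))
    intro y hy
    show |Q (ψ y - c)| ≤ Q (M + |c|)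
    rw [abs_of_nonneg (hQ0 _)]
    apply Qmono hQ hQe
    rw [abs_of_nonneg (by positivity : (0:ℝ) ≤ M + |c|)]
    calc |ψ y - c| ≤ |ψ y| + |c| := abs_sub _ _
      _ ≤ M + |c| := by have := hψb y; linarith
  have hintψ : ∀ n, IntegrableOn (fun y => |ψ y - ψ s|) (J n) := by
    intro n
    apply integrableOn_of_bound (hJm n) (hJT n) (hψm.sub_const _).abs
    intro y hy
    show abs (abs (ψ y - ψ s)) ≤ M + M
    rw [abs_abs]
    calc |ψ y - ψ s| ≤ |ψ y| + |ψ s| := abs_sub _ _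
      _ ≤ M + M := add_le_add (hψb y) (hψb s)
  -- Vc equals ofReal of the real average
  have hVc_eq : ∀ (n : ℕ) (c : ℝ),
      Vc Q φ (J n) c = ENNReal.ofReal (⨍ y in J n, Q (ψ y - c)) := by
    intro n c
    have h1 : Vc Q φ (J n) c = Vc Q ψ (J n) c := by
      unfold Vc avg
      congr 1
      apply setLIntegral_congr_fun (hJm n)
      intro y hy
      show ENNReal.ofReal (Q (φ y - c)) = ENNReal.ofReal (Q (ψ y - c))
      rw [hφψJ n y hy]
    rw [h1]
    exact avg_eq_ofReal (hJ0 n) (fun x => hQ0 _) (hintQ n c)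
  -- Part 1 : convergence of Vc for every c
  have key : ∀ c : ℝ, Tendsto (fun n => Vc Q φ (J n) c) atTop
      (𝓝 (ENNReal.ofReal (Q (ψ s - c)))) := by
    intro c
    obtain ⟨L, hL⟩ := Qlip hQ (M + |c| + |ψ s|)
    have hreal : Tendsto (fun n => ⨍ y in J n, Q (ψ y - c)) atTop (𝓝 (Q (ψ s - c))) := by
      rw [← tendsto_sub_nhds_zero_iff]
      apply squeeze_zero_norm (a := fun n => L * ⨍ y in J n, |ψ y - ψ s|)
      · intro n
        rw [Real.norm_eq_abs]
        have hconst : (⨍ _ in J n, Q (ψ s - c)) = Q (ψ s - c) :=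
          setAverage_const (hJ0 n) (hJT n) _
        have havgmul : (⨍ y in J n, (L : ℝ) * |ψ y - ψ s|) = L * ⨍ y in J n, |ψ y - ψ s| := by
          rw [setAverage_eq, setAverage_eq, integral_const_mul, smul_eq_mul, smul_eq_mul]
          ring
        rw [← hconst, ← havgmul]
        apply abs_average_sub_average_le (hJm n) (hintQ n c)
          (integrableOn_const (hJT n)) ((hintψ n).const_mul _)
        intro y hy
        have h1 : |ψ y - c| ≤ M + |c| + |ψ s| := by
          have := hψb y
          have h2 := abs_nonneg (ψ s)
          calc |ψ y - c| ≤ |ψ y| + |c| := abs_sub _ _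
            _ ≤ M + |c| + |ψ s| := by linarith
        have h2 : |ψ s - c| ≤ M + |c| + |ψ s| := by
          have := abs_sub (ψ s) c
          have h3 := abs_nonneg (ψ s)
          have h4 : |ψ s| ≤ M := hψb s
          calc |ψ s - c| ≤ |ψ s| + |c| := abs_sub _ _
            _ ≤ M + |c| + |ψ s| := by linarith
        have := hL _ _ h1 h2
        have heq : (ψ y - c) - (ψ s - c) = ψ y - ψ s := by ring
        rwa [heq] at this
      · have := hA.const_mul (L : ℝ)
        simpa using this
    have := (ENNReal.continuous_ofReal.tendsto _).comp hreal
    simpa [Function.comp_def, hVc_eq] using this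
  constructor
  · intro c
    rw [hφψs]
    simpa [hJdef] using key c
  -- Part 2 : convergence of the minimizers
  · have hminspec : ∀ n, ∀ c', Vc Q φ (J n) (CC Q φ (J n)) ≤ Vc Q φ (J n) c' := by
      intro n
      exact Classical.epsilon_spec
        (exists_Vc_min hQ hQe hQ0 hφ hM hM0 (hab n) (hsub n))
    rw [Metric.tendsto_atTop]
    intro ε hε
    -- key values
    have hQ0ε : Q 0 < Q ε := Qzero_lt hQ hQe (ne_of_gt hε)
    set r : ℝ := (Q 0 + Q ε) / 2 with hrdef
    have hr1 : Q 0 < r := by rw [hrdef]; linarith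
    have hr2 : r < Q ε := by rw [hrdef]; linarith
    have hrpos : 0 < r := lt_of_le_of_lt (hQ0 0) hr1
    have ht0 : Tendsto (fun n => Vc Q φ (J n) (ψ s)) atTop (𝓝 (ENNReal.ofReal (Q 0))) := by
      have := key (ψ s)
      simpa using this
    have htp : Tendsto (fun n => Vc Q φ (J n) (ψ s + ε)) atTop
        (𝓝 (ENNReal.ofReal (Q ε))) := by
      have := key (ψ s + ε)
      have heq : ψ s - (ψ s + ε) = -ε := by ring
      rw [heq, hQe] at this
      exact this
    have htm : Tendsto (fun n => Vc Q φ (J n) (ψ s - ε)) atTop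
        (𝓝 (ENNReal.ofReal (Q ε))) := by
      have := key (ψ s - ε)
      have heq : ψ s - (ψ s - ε) = ε := by ring
      rw [heq] at this
      exact this
    have hlt1 : ENNReal.ofReal (Q 0) < ENNReal.ofReal r :=
      (ENNReal.ofReal_lt_ofReal_iff hrpos).mpr hr1
    have hlt2 : ENNReal.ofReal r < ENNReal.ofReal (Q ε) :=
      (ENNReal.ofReal_lt_ofReal_iff (lt_of_le_of_lt (hQ0 0) hQ0ε)).mpr hr2
    have h1 : ∀ᶠ n in atTop, Vc Q φ (J n) (ψ s) < ENNReal.ofReal r :=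
      ht0.eventually_lt_const hlt1
    have h2 : ∀ᶠ n in atTop, ENNReal.ofReal r < Vc Q φ (J n) (ψ s + ε) :=
      htp.eventually_const_lt hlt2
    have h3 : ∀ᶠ n in atTop, ENNReal.ofReal r < Vc Q φ (J n) (ψ s - ε) :=
      htm.eventually_const_lt hlt2
    rw [eventually_atTop] at h1 h2 h3
    obtain ⟨N1, hN1⟩ := h1
    obtain ⟨N2, hN2⟩ := h2
    obtain ⟨N3, hN3⟩ := h3
    refine ⟨max N1 (max N2 N3), fun n hn => ?_⟩
    have hn1 : N1 ≤ n := le_trans (le_max_left _ _) hn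
    have hn2 : N2 ≤ n := le_trans (le_trans (le_max_left _ _) (le_max_right _ _)) hn
    have hn3 : N3 ≤ n := le_trans (le_trans (le_max_right _ _) (le_max_right _ _)) hn
    set cn := CC Q φ (J n) with hcndef
    rw [Real.dist_eq, hφψs]
    by_contra hcon
    push_neg at hcon
    -- hcon : ε ≤ |cn - ψ s|
    have hd : 0 < |cn - ψ s| := lt_of_lt_of_le hε hcon
    set θ : ℝ := ε / |cn - ψ s| with hθdef
    have hθ0 : 0 < θ := div_pos hε hd
    have hθ1 : θ ≤ 1 := by
      rw [hθdef, div_le_one hd]; exact hcon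
    set p : ℝ := ψ s + θ * (cn - ψ s) with hpdef
    -- the convexity inequality
    have hconv : Vc Q φ (J n) p ≤ Vc Q φ (J n) (ψ s) := by
      have hpt : ∀ y : ℝ, ENNReal.ofReal (Q (φ y - p)) ≤
          ENNReal.ofReal (1 - θ) * ENNReal.ofReal (Q (φ y - ψ s)) +
            ENNReal.ofReal θ * ENNReal.ofReal (Q (φ y - cn)) := by
        intro y
        have hcomb : φ y - p = (1 - θ) * (φ y - ψ s) + θ * (φ y - cn) := by
          rw [hpdef]; ring
        have := hQ.convexOn.2 (mem_univ (φ y - ψ s)) (mem_univ (φ y - cn))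
          (by linarith : (0:ℝ) ≤ 1 - θ) hθ0.le (by ring)
        simp only [smul_eq_mul] at this
        rw [← hcomb] at this
        calc ENNReal.ofReal (Q (φ y - p)) ≤
            ENNReal.ofReal ((1 - θ) * Q (φ y - ψ s) + θ * Q (φ y - cn)) :=
              ENNReal.ofReal_le_ofReal this
          _ = ENNReal.ofReal ((1 - θ) * Q (φ y - ψ s)) + ENNReal.ofReal (θ * Q (φ y - cn)) :=
              ENNReal.ofReal_add (mul_nonneg (by linarith) (hQ0 _)) (mul_nonneg hθ0.le (hQ0 _))
          _ = ENNReal.ofReal (1 - θ) * ENNReal.ofReal (Q (φ y - ψ s)) +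
              ENNReal.ofReal θ * ENNReal.ofReal (Q (φ y - cn)) := by
              rw [ENNReal.ofReal_mul (by linarith), ENNReal.ofReal_mul hθ0.le]
      have hm1 : Measurable fun y => ENNReal.ofReal (Q (φ y - ψ s)) :=
        ENNReal.measurable_ofReal.comp (hQm.measurable.comp (hφ.sub_const _))
      have hm2 : Measurable fun y => ENNReal.ofReal (Q (φ y - cn)) :=
        ENNReal.measurable_ofReal.comp (hQm.measurable.comp (hφ.sub_const _))
      have hlint : (∫⁻ y in J n, ENNReal.ofReal (Q (φ y - p))) ≤
          ENNReal.ofReal (1 - θ) * (∫⁻ y in J n, ENNReal.ofReal (Q (φ y - ψ s))) +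
            ENNReal.ofReal θ * ∫⁻ y in J n, ENNReal.ofReal (Q (φ y - cn)) := by
        calc (∫⁻ y in J n, ENNReal.ofReal (Q (φ y - p))) ≤
            ∫⁻ y in J n, (ENNReal.ofReal (1 - θ) * ENNReal.ofReal (Q (φ y - ψ s)) +
              ENNReal.ofReal θ * ENNReal.ofReal (Q (φ y - cn))) :=
              lintegral_mono fun y => hpt y
          _ = _ := by
              rw [lintegral_add_left (hm1.const_mul _), lintegral_const_mul _ hm1,
                lintegral_const_mul _ hm2]
      have step : Vc Q φ (J n) p ≤
          ENNReal.ofReal (1 - θ) * Vc Q φ (J n) (ψ s) +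
            ENNReal.ofReal θ * Vc Q φ (J n) cn := by
        unfold Vc avg
        calc (volume (J n))⁻¹ * ∫⁻ y in J n, ENNReal.ofReal (Q (φ y - p)) ≤
            (volume (J n))⁻¹ * (ENNReal.ofReal (1 - θ) *
              (∫⁻ y in J n, ENNReal.ofReal (Q (φ y - ψ s))) +
              ENNReal.ofReal θ * ∫⁻ y in J n, ENNReal.ofReal (Q (φ y - cn))) :=
              mul_le_mul_right hlint _
          _ = _ := by ring
      calc Vc Q φ (J n) p ≤ ENNReal.ofReal (1 - θ) * Vc Q φ (J n) (ψ s) +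
            ENNReal.ofReal θ * Vc Q φ (J n) cn := step
        _ ≤ ENNReal.ofReal (1 - θ) * Vc Q φ (J n) (ψ s) +
            ENNReal.ofReal θ * Vc Q φ (J n) (ψ s) := by
              gcongr
              exact hminspec n (ψ s)
        _ = (ENNReal.ofReal (1 - θ) + ENNReal.ofReal θ) * Vc Q φ (J n) (ψ s) := by ring
        _ = Vc Q φ (J n) (ψ s) := by
              rw [← ENNReal.ofReal_add (by linarith) hθ0.le]
              simp
    -- p is at distance exactly ε from ψ s
    have hplt : ENNReal.ofReal r < Vc Q φ (J n) p := by
      rcases le_total (ψ s) cn with hcs | hcs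
      · have hne : cn - ψ s ≠ 0 := by intro h0'; rw [h0'] at hd; simp at hd
        have hp' : p = ψ s + ε := by
          rw [hpdef, hθdef, abs_of_nonneg (by linarith : (0:ℝ) ≤ cn - ψ s),
            div_mul_cancel₀ _ hne]
        rw [hp']
        exact hN2 n hn2
      · have hne : cn - ψ s ≠ 0 := by intro h0'; rw [h0'] at hd; simp at hd
        have hp' : p = ψ s - ε := by
          rw [hpdef, hθdef, abs_of_nonpos (by linarith : cn - ψ s ≤ 0),
            div_neg, neg_mul, div_mul_cancel₀ _ hne]
          ring
        rw [hp']
        exact hN3 n hn3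
    have := lt_of_le_of_lt hconv (hN1 n hn1)
    exact absurd (lt_trans hplt this) (lt_irrefl _)
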